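/- Let M be a topological space, Z : M → Hom(Γ, ℂ) a continuous map, x ∈ M, ε > 0, and V ⊆ ℂ a strict cone such that Z_x(Γ) ∩ ∂V = {0} and |Z_x(a)| ≠ ε‖a‖ for all nonzero a ∈ Γ. Then for any finite set D ⊆ Γ, there exists an open neighborhood U of x such that D ∩ S(V, Z_x, ε) = D ∩ S(V, Z_y, ε) for all y ∈ U, where S(V,Z,ε) denotes the semigroup generated by {a ∈ Γ : Z(a) ∈ V, |Z(a)| ≥ ε‖a‖}. -/

import Mathlib

/-- The canonical embedding `Γ = ℤⁿ → Γ_ℝ = ℝⁿ`. -/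
def iotaR (n : ℕ) (a : Fin n → ℤ) : Fin n → ℝ := fun i => (a i : ℝ)

/-- Evaluation of a homomorphism `Z ∈ Hom(Γ, ℂ) ≅ ℂⁿ` on `a ∈ Γ = ℤⁿ`. -/
noncomputable def applyZ (n : ℕ) (Z : Fin n → ℂ) (a : Fin n → ℤ) : ℂ :=
  ∑ i, (a i : ℂ) * Z i

/-- The semigroup `S(V, Z, ε)` generated by `{a ∈ Γ : Z(a) ∈ V, |Z(a)| ≥ ε ‖a‖}`. -/
noncomputable def SVZe (n : ℕ) (Z : Fin n → ℂ) (ε : ℝ) (V : Set ℂ) : Set (Fin n → ℤ) :=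
  (AddSubsemigroup.closure
    {a : Fin n → ℤ | applyZ n Z a ∈ V ∧ ε * ‖iotaR n a‖ ≤ ‖applyZ n Z a‖} :
      AddSubsemigroup (Fin n → ℤ))


lemma cone_functional (V : Set ℂ)
    (hVscale : ∀ r : ℝ, 0 < r → ∀ z ∈ V, r • z ∈ V)
    (hVadd : ∀ z ∈ V, ∀ w ∈ V, z + w ∈ V)
    (hVstrict : ¬ ∃ (p v : ℂ), v ≠ 0 ∧ ∀ t : ℝ, p + t • v ∈ closure V) :
    ∃ (f : ℂ →L[ℝ] ℝ) (c : ℝ), 0 < c ∧ ∀ z ∈ closure V, c * ‖z‖ ≤ f z := by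
  set K := closure V with hK
  have hKscale : ∀ r : ℝ, 0 < r → ∀ z ∈ K, r • z ∈ K := by
    intro r hr z hz
    exact map_mem_closure (continuous_const_smul r) hz (fun w hw => hVscale r hr w hw)
  have hKadd : ∀ z ∈ K, ∀ w ∈ K, z + w ∈ K := by
    intro z hz w hw
    exact map_mem_closure₂ continuous_add hz hw hVadd
  rcases Set.eq_empty_or_nonempty V with hV | ⟨v₀, hv₀⟩
  · exact ⟨0, 1, one_pos, by simp [hK, hV]⟩
  have hK0 : (0 : ℂ) ∈ K := by
    have ht : Filter.Tendsto (fun k : ℕ => (1 / ((k : ℝ) + 1)) • v₀) Filter.atTop (nhds 0) := by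
      simpa using (tendsto_one_div_add_atTop_nhds_zero_nat (𝕜 := ℝ)).smul_const v₀
    exact mem_closure_of_tendsto ht (Filter.Eventually.of_forall fun k =>
      hVscale _ (by positivity) _ hv₀)
  have hVconv : Convex ℝ V := by
    intro z hz w hw a b ha hb hab
    rcases eq_or_lt_of_le ha with ha0 | ha0
    · have hb1 : b = 1 := by linarith
      simp [← ha0, hb1, hw]
    rcases eq_or_lt_of_le hb with hb0 | hb0
    · have ha1 : a = 1 := by linarith
      simp [← hb0, ha1, hz]
    exact hVadd _ (hVscale a ha0 z hz) _ (hVscale b hb0 w hw)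
  have hKconv : Convex ℝ K := hVconv.closure
  have hKclosed : IsClosed K := isClosed_closure
  have hKsal : ∀ z ∈ K, z ≠ 0 → -z ∉ K := by
    intro z hz hz0 hneg
    refine hVstrict ⟨0, z, hz0, fun t => ?_⟩
    rw [zero_add]
    rcases lt_trichotomy t 0 with ht | ht | ht
    · have : t • z = (-t) • (-z) := by simp
      rw [this]; exact hKscale _ (by linarith) _ hneg
    · simpa [ht] using hK0
    · exact hKscale _ ht _ hz
  -- separating functionals at each point of the compact base
  have hsep : ∀ z : ℂ, z ∈ K → ‖z‖ = 1 → ∃ g : ℂ →L[ℝ] ℝ, (∀ a ∈ K, 0 ≤ g a) ∧ 0 < g z := by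
    intro z hzK hz1
    have hz0 : z ≠ 0 := by intro h; rw [h] at hz1; simp at hz1
    have hnz : -z ∉ K := hKsal z hzK hz0
    obtain ⟨f, u, hfu, huf⟩ := geometric_hahn_banach_closed_point hKconv hKclosed hnz
    have hu0 : 0 < u := by simpa using hfu 0 hK0
    have hfle : ∀ a ∈ K, f a ≤ 0 := by
      intro a ha
      by_contra h
      push_neg at h
      have ht : (0 : ℝ) < (u + 1) / f a := by positivity
      have := hfu _ (hKscale _ ht a ha)
      rw [map_smul] at this
      have : (u + 1) / f a * f a < u := this
      rw [div_mul_cancel₀ _ (ne_of_gt h)] at this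
      linarith
    refine ⟨-f, fun a ha => by simpa using hfle a ha, ?_⟩
    have : f (-z) > u := huf
    have : -f z > u := by simpa using this
    simp only [ContinuousLinearMap.neg_apply]
    linarith
  set C := K ∩ Metric.sphere (0:ℂ) 1 with hC
  have hCcomp : IsCompact C := (isCompact_sphere 0 1).inter_left hKclosed
  rcases Set.eq_empty_or_nonempty C with hCe | hCne
  · -- K ⊆ {0}
    refine ⟨0, 1, one_pos, fun z hz => ?_⟩
    have hz0 : z = 0 := by
      by_contra h
      have hzn : 0 < ‖z‖ := norm_pos_iff.mpr h
      have : (‖z‖⁻¹ • z) ∈ C := by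
        constructor
        · exact hKscale _ (inv_pos.mpr hzn) _ hz
        · simp only [Metric.mem_sphere, dist_zero_right, norm_smul, norm_inv, norm_norm]
          exact inv_mul_cancel₀ hzn.ne'
      rw [hCe] at this; exact this
    simp [hz0]
  choose! g hg0 hgpos using hsep
  have hcover : C ⊆ ⋃ z ∈ C, {w : ℂ | 0 < g z w} := by
    intro w hw
    exact Set.mem_biUnion hw (hgpos w hw.1 (by simpa using hw.2))
  obtain ⟨s, hsC, hsfin, hscov⟩ := hCcomp.elim_finite_subcover_image
    (fun z _ => isOpen_lt continuous_const (g z).continuous) hcover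
  set F : ℂ →L[ℝ] ℝ := ∑ z ∈ hsfin.toFinset, g z with hF
  have hF0 : ∀ a ∈ K, 0 ≤ F a := by
    intro a ha
    rw [hF, ContinuousLinearMap.sum_apply]
    exact Finset.sum_nonneg fun z hz => hg0 z (hsC (hsfin.mem_toFinset.mp hz)).1 (by
      have := (hsC (hsfin.mem_toFinset.mp hz)).2
      simpa using this) a ha
  have hFpos : ∀ w ∈ C, 0 < F w := by
    intro w hw
    obtain ⟨z, hzs, hzw⟩ := Set.mem_iUnion₂.mp (hscov hw)
    rw [hF, ContinuousLinearMap.sum_apply]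
    refine Finset.sum_pos' (fun z' hz' => hg0 z' (hsC (hsfin.mem_toFinset.mp hz')).1 (by
      simpa using (hsC (hsfin.mem_toFinset.mp hz')).2) w hw.1) ⟨z, hsfin.mem_toFinset.mpr hzs, hzw⟩
  obtain ⟨z₀, hz₀C, hz₀min⟩ := hCcomp.exists_isMinOn hCne (F.continuous.continuousOn)
  refine ⟨F, F z₀, hFpos z₀ hz₀C, fun z hz => ?_⟩
  rcases eq_or_ne z 0 with rfl | hz0
  · simp
  · have hzn : 0 < ‖z‖ := norm_pos_iff.mpr hz0
    have hw : (‖z‖⁻¹ • z) ∈ C := by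
      constructor
      · exact hKscale _ (inv_pos.mpr hzn) _ hz
      · simp only [Metric.mem_sphere, dist_zero_right, norm_smul, norm_inv, norm_norm]
        exact inv_mul_cancel₀ hzn.ne'
    have h1 : F z₀ ≤ F (‖z‖⁻¹ • z) := hz₀min hw
    rw [map_smul, smul_eq_mul] at h1
    calc F z₀ * ‖z‖ ≤ (‖z‖⁻¹ * F z) * ‖z‖ := by nlinarith
    _ = F z := by rw [inv_mul_eq_div, div_mul_eq_mul_div, mul_div_assoc, div_self hzn.ne', mul_one]


lemma applyZ_zero (n : ℕ) (Z : Fin n → ℂ) : applyZ n Z 0 = 0 := by simp [applyZ]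

lemma applyZ_add (n : ℕ) (Z : Fin n → ℂ) (a b : Fin n → ℤ) :
    applyZ n Z (a + b) = applyZ n Z a + applyZ n Z b := by
  simp [applyZ, ← Finset.sum_add_distrib, add_mul]

lemma applyZ_list_sum (n : ℕ) (Z : Fin n → ℂ) (l : List (Fin n → ℤ)) :
    applyZ n Z l.sum = (l.map (applyZ n Z)).sum := by
  induction l with
  | nil => simp [applyZ_zero]
  | cons b t ih => simp [applyZ_add, ih]

lemma continuous_applyZ (n : ℕ) (a : Fin n → ℤ) :
    Continuous fun Z : Fin n → ℂ => applyZ n Z a := by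
  unfold applyZ
  exact continuous_finset_sum _ fun i _ => continuous_const.mul (continuous_apply i)

lemma iotaR_zero (n : ℕ) : iotaR n 0 = 0 := by funext i; simp [iotaR]

lemma iotaR_ne_zero (n : ℕ) {a : Fin n → ℤ} (ha : a ≠ 0) : iotaR n a ≠ 0 := by
  intro h
  apply ha
  funext i
  have : (a i : ℝ) = 0 := congrFun h i
  exact_mod_cast this

lemma listsum_mem {G : Type*} [AddCommMonoid G] (S : AddSubsemigroup G) :
    ∀ l : List G, l ≠ [] → (∀ b ∈ l, b ∈ S) → l.sum ∈ S := by
  intro l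
  induction l with
  | nil => simp
  | cons b t ih =>
    intro _ h
    cases t with
    | nil => simpa using h b (by simp)
    | cons c t' =>
      rw [List.sum_cons]
      exact S.add_mem (h b (by simp)) (ih (by simp) fun z hz => h z (by simp [hz]))

lemma mem_addclosure_exists_list {G : Type*} [AddCommMonoid G] (T : Set G) (a : G)
    (h : a ∈ AddSubsemigroup.closure T) :
    ∃ l : List G, l ≠ [] ∧ (∀ b ∈ l, b ∈ T) ∧ l.sum = a := by
  induction h using AddSubsemigroup.closure_induction with
  | mem z hz => exact ⟨[z], by simp, by simpa using hz, by simp⟩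
  | add z w hz hw ihz ihw =>
    obtain ⟨l1, h1, h1T, h1s⟩ := ihz
    obtain ⟨l2, h2, h2T, h2s⟩ := ihw
    refine ⟨l1 ++ l2, by simp [h1], ?_, by simp [h1s, h2s]⟩
    intro b hb
    rcases List.mem_append.mp hb with hb | hb
    · exact h1T b hb
    · exact h2T b hb

/-- Local constancy of the finite part of the semigroup `S(V, Z_x, ε)`
under deformation of a continuous family of central charges `Z : M → Hom(Γ, ℂ)`. -/
theorem stmt10 (n : ℕ) {M : Type*} [TopologicalSpace M]
    (Z : M → Fin n → ℂ) (hZ : Continuous Z) (x : M)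
    (ε : ℝ) (hε : 0 < ε) (V : Set ℂ)
    (hVscale : ∀ r : ℝ, 0 < r → ∀ z ∈ V, r • z ∈ V)
    (hVadd : ∀ z ∈ V, ∀ w ∈ V, z + w ∈ V)
    (hVstrict : ¬ ∃ (p v : ℂ), v ≠ 0 ∧ ∀ t : ℝ, p + t • v ∈ closure V)
    (hbd : ∀ a : Fin n → ℤ, applyZ n (Z x) a ∈ frontier V → applyZ n (Z x) a = 0)
    (hne : ∀ a : Fin n → ℤ, a ≠ 0 → ‖applyZ n (Z x) a‖ ≠ ε * ‖iotaR n a‖) :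
    ∀ D : Set (Fin n → ℤ), D.Finite →
      ∃ U : Set M, IsOpen U ∧ x ∈ U ∧ ∀ y ∈ U,
        D ∩ SVZe n (Z x) ε V = D ∩ SVZe n (Z y) ε V := by
  intro D hD
  obtain ⟨f, c, hc, hfc⟩ := cone_functional V hVscale hVadd hVstrict
  have hφ : ∀ a : Fin n → ℤ, Continuous fun y : M => applyZ n (Z y) a :=
    fun a => (continuous_applyZ n a).comp hZ
  set Gen : M → Set (Fin n → ℤ) := fun y =>
    {b : Fin n → ℤ | applyZ n (Z y) b ∈ V ∧
      ε * ‖iotaR n b‖ ≤ ‖applyZ n (Z y) b‖} with hGen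
  have hfV : ∀ z ∈ V, c * ‖z‖ ≤ f z := fun z hz => hfc z (subset_closure hz)
  set Dfin := hD.toFinset with hDfin
  set R : ℝ := 1 + ∑ a ∈ Dfin, max 0 ((f (applyZ n (Z x) a) + 1) / (c * ε)) with hRdef
  have hcε : 0 < c * ε := mul_pos hc hε
  have hR : ∀ a ∈ D, f (applyZ n (Z x) a) + 1 ≤ c * ε * R := by
    intro a ha
    have h1 : (f (applyZ n (Z x) a) + 1) / (c * ε) ≤ R := by
      have hterm : max 0 ((f (applyZ n (Z x) a) + 1) / (c * ε)) ≤
          ∑ a' ∈ Dfin, max 0 ((f (applyZ n (Z x) a') + 1) / (c * ε)) :=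
        Finset.single_le_sum (f := fun a' => max 0 ((f (applyZ n (Z x) a') + 1) / (c * ε)))
          (fun a' _ => le_max_left 0 _) (hD.mem_toFinset.mpr ha)
      have := le_max_right 0 ((f (applyZ n (Z x) a) + 1) / (c * ε))
      rw [hRdef]; linarith
    calc f (applyZ n (Z x) a) + 1
        = (f (applyZ n (Z x) a) + 1) / (c * ε) * (c * ε) := by
          field_simp
      _ ≤ R * (c * ε) := by nlinarith
      _ = c * ε * R := by ring
  set U₀ : Set M := {y | ∀ a ∈ Dfin, f (applyZ n (Z y) a) < f (applyZ n (Z x) a) + 1}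
    with hU₀def
  have hU₀open : IsOpen U₀ := by
    have : U₀ = ⋂ a ∈ Dfin,
        (fun y => f (applyZ n (Z y) a)) ⁻¹' Set.Iio (f (applyZ n (Z x) a) + 1) := by
      ext y; simp [hU₀def]
    rw [this]
    exact isOpen_biInter_finset fun a _ =>
      isOpen_Iio.preimage (f.continuous.comp (hφ a))
  have hxU₀ : x ∈ U₀ := fun a _ => by linarith
  have hbound : ∀ y ∈ U₀, ∀ a ∈ D, ∀ l : List (Fin n → ℤ),
      (∀ b ∈ l, b ∈ Gen y) → l.sum = a → ∀ b ∈ l, ‖iotaR n b‖ ≤ R := by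
    intro y hy a ha l hl hsum b hb
    set L := l.map fun b' => f (applyZ n (Z y) b') with hL
    have hLsum : L.sum = f (applyZ n (Z y) a) := by
      calc L.sum = ((l.map (applyZ n (Z y))).map f).sum := by rw [List.map_map]; rfl
        _ = f ((l.map (applyZ n (Z y))).sum) := (map_list_sum (f : ℂ →+ ℝ) _).symm
        _ = f (applyZ n (Z y) l.sum) := by rw [applyZ_list_sum]
        _ = f (applyZ n (Z y) a) := by rw [hsum]
    have hnonneg : ∀ r ∈ L, (0:ℝ) ≤ r := by
      intro r hr
      obtain ⟨b', hb', rfl⟩ := List.mem_map.mp hr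
      exact le_trans (by positivity) (hfV _ (hl b' hb').1)
    have h1 : f (applyZ n (Z y) b) ≤ L.sum :=
      List.single_le_sum hnonneg _ (List.mem_map_of_mem hb)
    have h2 : c * (ε * ‖iotaR n b‖) ≤ f (applyZ n (Z y) b) := by
      have hg := hl b hb
      have h3 := hfV _ hg.1
      have habs : ε * ‖iotaR n b‖ ≤ ‖applyZ n (Z y) b‖ := by
        exact hg.2
      nlinarith
    have h3 : f (applyZ n (Z y) a) < f (applyZ n (Z x) a) + 1 :=
      hy a (hD.mem_toFinset.mpr ha)
    have h4 := hR a ha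
    have h5 : c * ε * ‖iotaR n b‖ ≤ c * ε * R := by rw [hLsum] at h1; nlinarith
    exact le_of_mul_le_mul_left h5 hcε
  have hBfin : {b : Fin n → ℤ | ‖iotaR n b‖ ≤ R}.Finite := by
    apply Set.Finite.subset (Set.Finite.pi fun i : Fin n => Set.finite_Icc (-⌈R⌉) ⌈R⌉)
    intro b hb
    rw [Set.mem_univ_pi]
    intro i
    have h1 : |(b i : ℝ)| ≤ R :=
      le_trans (by simpa [iotaR] using norm_le_pi_norm (iotaR n b) i) hb
    have h2 : ((|b i| : ℤ) : ℝ) ≤ ((⌈R⌉ : ℤ) : ℝ) := by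
      push_cast
      exact le_trans h1 (Int.le_ceil R)
    have h3 : |b i| ≤ ⌈R⌉ := by exact_mod_cast h2
    exact Set.mem_Icc.mpr (abs_le.mp h3)
  have hstab : ∀ b : Fin n → ℤ, ∃ N : Set M, IsOpen N ∧ x ∈ N ∧
      ∀ y ∈ N, (b ∈ Gen y ↔ b ∈ Gen x) := by
    intro b
    by_cases hb0 : b = 0
    · refine ⟨Set.univ, isOpen_univ, Set.mem_univ x, fun y _ => ?_⟩
      subst hb0
      simp [hGen, applyZ_zero, iotaR_zero]
    · have hnormb : 0 < ‖iotaR n b‖ := norm_pos_iff.mpr (iotaR_ne_zero n hb0)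
      have hpos : 0 < ε * ‖iotaR n b‖ := mul_pos hε hnormb
      have hne' := hne b hb0
      by_cases hmem : b ∈ Gen x
      · have hlt : ε * ‖iotaR n b‖ < ‖applyZ n (Z x) b‖ :=
          lt_of_le_of_ne hmem.2 (Ne.symm hne')
        have hzne : applyZ n (Z x) b ≠ 0 := by
          intro h; rw [h] at hlt; simp at hlt; linarith
        have hint : applyZ n (Z x) b ∈ interior V := by
          by_contra h
          exact hzne (hbd b ⟨subset_closure hmem.1, h⟩)
        refine ⟨(fun y => applyZ n (Z y) b) ⁻¹' interior V ∩
          (fun y => ‖applyZ n (Z y) b‖) ⁻¹' Set.Ioi (ε * ‖iotaR n b‖),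
          (isOpen_interior.preimage (hφ b)).inter
            (isOpen_Ioi.preimage (continuous_norm.comp (hφ b))),
          ⟨hint, hlt⟩, fun y hy => ?_⟩
        exact iff_of_true ⟨interior_subset hy.1, le_of_lt hy.2⟩ hmem
      · rcases lt_or_gt_of_ne hne' with hlt | hgt
        · refine ⟨(fun y => ‖applyZ n (Z y) b‖) ⁻¹' Set.Iio (ε * ‖iotaR n b‖),
            isOpen_Iio.preimage (continuous_norm.comp (hφ b)), hlt, fun y hy => ?_⟩
          exact iff_of_false (fun hg => absurd hg.2 (not_le.mpr hy)) hmem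
        · have hzne : applyZ n (Z x) b ≠ 0 := by
            intro h; rw [h] at hgt; simp at hgt; linarith
          have hnV : applyZ n (Z x) b ∉ V := fun hV => hmem ⟨hV, le_of_lt hgt⟩
          have hncl : applyZ n (Z x) b ∉ closure V := by
            intro hcl
            exact hzne (hbd b ⟨hcl, fun hi => hnV (interior_subset hi)⟩)
          refine ⟨(fun y => applyZ n (Z y) b) ⁻¹' (closure V)ᶜ,
            isClosed_closure.isOpen_compl.preimage (hφ b), hncl, fun y hy => ?_⟩
          exact iff_of_false (fun hg => hy (subset_closure hg.1)) hmem
  choose N hNopen hNx hNiff using hstab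
  set U : Set M := U₀ ∩ ⋂ b ∈ hBfin.toFinset, N b with hUdef
  have hUopen : IsOpen U := hU₀open.inter (isOpen_biInter_finset fun b _ => hNopen b)
  have hxU : x ∈ U := ⟨hxU₀, Set.mem_iInter₂.mpr fun b _ => hNx b⟩
  have key : ∀ y₁ ∈ U, ∀ y₂ ∈ U, ∀ a ∈ D,
      a ∈ SVZe n (Z y₁) ε V → a ∈ SVZe n (Z y₂) ε V := by
    intro y₁ hy₁ y₂ hy₂ a ha hmem
    have hmem' : a ∈ AddSubsemigroup.closure (Gen y₁) := hmem
    obtain ⟨l, hlne, hlT, hlsum⟩ := mem_addclosure_exists_list _ _ hmem'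
    have hbd' := hbound y₁ hy₁.1 a ha l hlT hlsum
    have hl2 : ∀ b ∈ l, b ∈ Gen y₂ := by
      intro b hb
      have hbB : b ∈ hBfin.toFinset := hBfin.mem_toFinset.mpr (hbd' b hb)
      have e1 := hNiff b y₁ (Set.mem_iInter₂.mp hy₁.2 b hbB)
      have e2 := hNiff b y₂ (Set.mem_iInter₂.mp hy₂.2 b hbB)
      exact e2.mpr (e1.mp (hlT b hb))
    show a ∈ AddSubsemigroup.closure (Gen y₂)
    rw [← hlsum]
    exact listsum_mem _ l hlne fun b hb => AddSubsemigroup.subset_closure (hl2 b hb)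
  refine ⟨U, hUopen, hxU, fun y hy => ?_⟩
  ext a
  simp only [Set.mem_inter_iff]
  constructor
  · rintro ⟨haD, haS⟩
    exact ⟨haD, key x hxU y hy a haD haS⟩
  · rintro ⟨haD, haS⟩
    exact ⟨haD, key y hy x hxU a haD haS⟩
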